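/- Fix $n\in\{2,4,6,\dots\}$ and define $f:[0,1]\to\mathbb{R}$ by $f(x)=x-\frac{(-1)^i}{n+1}\big(x-\frac{i+1/2}{n+1}\big)$ for $x\in[\frac{i}{n+1},\frac{i+1}{n+1}]$, $i\in\{0,\dots,n\}$. Then $f$ is well-defined and continuous, $\int_{i/(n+1)}^{(i+1)/(n+1)}(f(x)-x)\,dx=0$ for every $i$, and $\int_0^1 x(f(x)-x)\,dx=-\frac{1}{12(n+1)^4}\neq 0$. -/

import Mathlib

open intervalIntegral

noncomputable def sawF (n : ℕ) (x : ℝ) : ℝ :=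
  x + (|2 * Int.fract (((n : ℝ) + 1) * x / 2) - 1| - 1 / 2) / ((n : ℝ) + 1) ^ 2

lemma sawF_cont (n : ℕ) : Continuous (sawF n) := by
  have hg : Continuous ((fun y : ℝ => |2 * y - 1|) ∘ Int.fract) :=
    ContinuousOn.comp_fract'' (by fun_prop) (by norm_num)
  have h2 : Continuous fun x : ℝ => |2 * Int.fract (((n : ℝ) + 1) * x / 2) - 1| :=
    hg.comp (by fun_prop)
  exact continuous_id.add (((h2.sub continuous_const).div_const _))

lemma sawF_piece (n i : ℕ) (x : ℝ)
    (hx : x ∈ Set.Icc ((i : ℝ) / (n + 1)) (((i : ℝ) + 1) / (n + 1))) :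
    sawF n x = x - (-1 : ℝ) ^ i / (n + 1) * (x - ((i : ℝ) + 1 / 2) / (n + 1)) := by
  have hN : (0 : ℝ) < (n : ℝ) + 1 := by positivity
  obtain ⟨hx1, hx2⟩ := hx
  set s : ℝ := ((n : ℝ) + 1) * x with hs
  have hs1 : (i : ℝ) ≤ s := by
    rw [div_le_iff₀ hN] at hx1; nlinarith
  have hs2 : s ≤ (i : ℝ) + 1 := by
    rw [le_div_iff₀ hN] at hx2; nlinarith
  have hfract : 2 * Int.fract (s / 2) - 1 = s - 2 * (⌊s / 2⌋ : ℝ) - 1 := by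
    rw [Int.fract]; ring
  rcases Nat.even_or_odd i with ⟨k, hk⟩ | ⟨k, hk⟩
  · have hki : (i : ℝ) = 2 * k := by rw [hk]; push_cast; ring
    have hfl : ⌊s / 2⌋ = (k : ℤ) := by
      rw [Int.floor_eq_iff]
      constructor
      · push_cast; linarith
      · push_cast; linarith
    have habs : |2 * Int.fract (s / 2) - 1| = (i : ℝ) + 1 - s := by
      rw [hfract, hfl, abs_of_nonpos (by push_cast; linarith)]
      push_cast; linarith
    have hpow : (-1 : ℝ) ^ i = 1 := by
      rw [hk]; exact Even.neg_one_pow ⟨k, rfl⟩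
    unfold sawF
    rw [habs, hpow, hs]
    field_simp
    ring
  · have hki : (i : ℝ) = 2 * k + 1 := by rw [hk]; push_cast; ring
    have habs : |2 * Int.fract (s / 2) - 1| = s - (i : ℝ) := by
      rcases lt_or_eq_of_le hs2 with h2 | h2
      · have hfl : ⌊s / 2⌋ = (k : ℤ) := by
          rw [Int.floor_eq_iff]
          constructor
          · push_cast; linarith
          · push_cast; linarith
        rw [hfract, hfl, abs_of_nonneg (by push_cast; linarith)]
        push_cast; linarith
      · have hfl : ⌊s / 2⌋ = (k : ℤ) + 1 := by
          rw [Int.floor_eq_iff]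
          constructor
          · push_cast; linarith
          · push_cast; linarith
        rw [hfract, hfl]
        push_cast
        rw [show s - 2 * ((k : ℝ) + 1) - 1 = -1 by linarith, abs_neg, abs_one]
        linarith
    have hpow : (-1 : ℝ) ^ i = -1 := by
      rw [hk]; exact Odd.neg_one_pow ⟨k, rfl⟩
    unfold sawF
    rw [habs, hpow, hs]
    field_simp
    ring

theorem saddle_realization_exists (n : ℕ) (hn2 : 2 ≤ n) (hne : Even n) :
    ∃ f : ℝ → ℝ, ContinuousOn f (Set.Icc (0:ℝ) 1) ∧
      (∀ i ≤ n, ∀ x ∈ Set.Icc ((i : ℝ) / (n + 1)) (((i : ℝ) + 1) / (n + 1)),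
        f x = x - (-1 : ℝ) ^ i / (n + 1) * (x - ((i : ℝ) + 1 / 2) / (n + 1))) ∧
      (∀ i ≤ n,
        (∫ x in ((i : ℝ) / (n + 1))..(((i : ℝ) + 1) / (n + 1)), (f x - x)) = 0) ∧
      (∫ x in (0:ℝ)..1, x * (f x - x)) = -1 / (12 * ((n : ℝ) + 1) ^ 4) ∧
      (-1 / (12 * ((n : ℝ) + 1) ^ 4) : ℝ) ≠ 0 := by
  have hN : (0 : ℝ) < (n : ℝ) + 1 := by positivity
  have hN' : ((n : ℝ) + 1) ≠ 0 := ne_of_gt hN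
  have hab : ∀ i : ℕ, (i : ℝ) / (n + 1) ≤ ((i : ℝ) + 1) / (n + 1) := by
    intro i; rw [div_le_div_iff₀ hN hN]; nlinarith
  -- integral of f - x on each piece
  have hint1 : ∀ i : ℕ,
      (∫ x in ((i : ℝ) / (n + 1))..(((i : ℝ) + 1) / (n + 1)), (sawF n x - x)) = 0 := by
    intro i
    have hcongr : ∫ x in ((i : ℝ) / (n + 1))..(((i : ℝ) + 1) / (n + 1)), (sawF n x - x)
        = ∫ x in ((i : ℝ) / (n + 1))..(((i : ℝ) + 1) / (n + 1)),
            (-((-1 : ℝ) ^ i / (n + 1)) * x + (-1 : ℝ) ^ i / (n + 1) * (((i : ℝ) + 1 / 2) / (n + 1))) := by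
      apply intervalIntegral.integral_congr
      intro x hx
      rw [Set.uIcc_of_le (hab i)] at hx
      dsimp only; rw [sawF_piece n i x hx]; ring
    rw [hcongr, intervalIntegral.integral_add, intervalIntegral.integral_const_mul,
      integral_id, intervalIntegral.integral_const]
    · simp only [smul_eq_mul]
      field_simp
      ring
    · exact (intervalIntegrable_id.const_mul _)
    · exact intervalIntegrable_const
  have hint2 : ∀ i : ℕ,
      (∫ x in ((i : ℝ) / (n + 1))..(((i : ℝ) + 1) / (n + 1)), x * (sawF n x - x))
        = -(-1 : ℝ) ^ i / (12 * ((n : ℝ) + 1) ^ 4) := by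
    intro i
    have hcongr : ∫ x in ((i : ℝ) / (n + 1))..(((i : ℝ) + 1) / (n + 1)), x * (sawF n x - x)
        = ∫ x in ((i : ℝ) / (n + 1))..(((i : ℝ) + 1) / (n + 1)),
            (-((-1 : ℝ) ^ i / (n + 1)) * x ^ 2 + ((-1 : ℝ) ^ i / (n + 1) * (((i : ℝ) + 1 / 2) / (n + 1))) * x) := by
      apply intervalIntegral.integral_congr
      intro x hx
      rw [Set.uIcc_of_le (hab i)] at hx
      dsimp only; rw [sawF_piece n i x hx]; ring
    rw [hcongr, intervalIntegral.integral_add, intervalIntegral.integral_const_mul,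
      intervalIntegral.integral_const_mul, integral_id, integral_pow]
    · push_cast
      field_simp
      ring
    · exact ((intervalIntegral.intervalIntegrable_pow 2).const_mul _)
    · exact (intervalIntegrable_id.const_mul _)
  refine ⟨sawF n, (sawF_cont n).continuousOn, fun i _ x hx => sawF_piece n i x hx,
    fun i _ => hint1 i, ?_, ?_⟩
  · -- main integral
    have hsplit : ∑ i ∈ Finset.range (n + 1),
        (∫ x in (((i : ℕ) : ℝ) / (n + 1))..((((i + 1 : ℕ)) : ℝ) / (n + 1)), x * (sawF n x - x))
        = ∫ x in (((0 : ℕ) : ℝ) / (n + 1))..((((n + 1 : ℕ)) : ℝ) / (n + 1)), x * (sawF n x - x) := by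
      apply intervalIntegral.sum_integral_adjacent_intervals
      intro k _
      exact (continuous_id.mul ((sawF_cont n).sub continuous_id)).intervalIntegrable _ _
    have e0 : (((0 : ℕ) : ℝ)) / ((n : ℝ) + 1) = 0 := by norm_num
    have e1 : (((n + 1 : ℕ)) : ℝ) / ((n : ℝ) + 1) = 1 := by push_cast; field_simp
    rw [e0, e1] at hsplit
    rw [← hsplit]
    have : ∀ i ∈ Finset.range (n + 1),
        (∫ x in (((i : ℕ) : ℝ) / (n + 1))..((((i + 1 : ℕ)) : ℝ) / (n + 1)), x * (sawF n x - x))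
        = -(-1 : ℝ) ^ i / (12 * ((n : ℝ) + 1) ^ 4) := by
      intro i _
      have := hint2 i
      push_cast
      convert this using 3
    rw [Finset.sum_congr rfl this]
    have hsum : ∑ i ∈ Finset.range (n + 1), ((-1 : ℝ)) ^ i = 1 := by
      rw [neg_one_geom_sum, if_neg (by simp [Nat.even_add_one, hne])]
    rw [← Finset.sum_div]
    rw [show (∑ i ∈ Finset.range (n + 1), -(-1 : ℝ) ^ i)
        = -∑ i ∈ Finset.range (n + 1), (-1 : ℝ) ^ i by rw [Finset.sum_neg_distrib]]
    rw [hsum]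
  · intro h
    have h1 : (0:ℝ) < 1 / (12 * ((n : ℝ) + 1) ^ 4) := by positivity
    rw [neg_div] at h
    linarith [h ▸ h1]
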